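/- Let Φ: I → ℝ be C^4 on an open interval I with Φ″ ≥ 0 and Φ″Φ^{(4)} ≥ 2(Φ^{(3)})^2, and let Ψ_p(t) = (t−a+1)^p with 1 < p < 2 on a bounded interval I_0 = (a,b) with closure contained in I. Set M = sup_{I_0}|Φ^{(3)}|, N = inf_{I_0}|Ψ_p^{(3)}| > 0, γ_p = (3−p)/(2−p). Then for every ε > 0, the function Φ_ε = Φ + εΨ_p satisfies Φ_ε″ Φ_ε^{(4)} ≥ δ (Φ_ε^{(3)})^2 on I_0 for every δ with 2 < δ < min{ (2γ_p)^{1/2}, (2M^2 + γ_p ε^2 N^2)/(M^2 + ε^2 N^2) }. -/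

import Mathlib

set_option maxHeartbeats 1000000

open Set Filter Topology

private lemma iterDW_open {n : ℕ} {f : ℝ → ℝ} {s : Set ℝ} (hs : IsOpen s) {x : ℝ}
    (hx : x ∈ s) : iteratedDerivWithin n f s x = iteratedDeriv n f x := by
  rw [iteratedDerivWithin, iteratedDeriv, iteratedFDerivWithin_of_isOpen n hs hx]

private lemma rpow_shift_hasDerivAt (a q : ℝ) {t : ℝ} (h : 0 < t - a + 1) :
    HasDerivAt (fun s : ℝ => (s - a + 1) ^ q) (q * (t - a + 1) ^ (q - 1)) t := by
  have hb : HasDerivAt (fun s : ℝ => s - a + 1) 1 t := by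
    simpa using ((hasDerivAt_id t).sub_const a).add_const 1
  have := (Real.hasDerivAt_rpow_const (x := t - a + 1) (p := q) (Or.inl h.ne')).comp t hb
  rw [mul_one] at this
  exact this


private lemma sq_zero_of {A2 A3 A4 : ℝ} (h : 2 * A3 ^ 2 ≤ A2 * A4) (h0 : A2 = 0) :
    A3 = 0 := by
  rw [h0, zero_mul] at h
  have h1 : A3 ^ 2 ≤ 0 := by linarith
  have h2 : A3 ^ 2 = 0 := le_antisymm h1 (sq_nonneg A3)
  exact pow_eq_zero_iff (by norm_num : (2:ℕ) ≠ 0) |>.mp h2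

private lemma case1_ineq {δ γ ε A4 B2 B3 B4 : ℝ} (hδγ : δ ≤ γ) (hε : 0 < ε)
    (hB2 : 0 < B2) (hA4 : 0 ≤ A4) (hBB : B2 * B4 = γ * B3 ^ 2) :
    δ * (0 + ε * B3) ^ 2 ≤ (0 + ε * B2) * (A4 + ε * B4) := by
  have h1 : 0 ≤ ε * B2 * A4 := by positivity
  nlinarith [sq_nonneg B3, sq_nonneg ε, mul_pos hε hε]

private lemma amgm {u v rq : ℝ} (hu : 0 ≤ u) (hv : 0 ≤ v) (hrq : 0 ≤ rq)
    (h : rq ^ 2 = u * v) : 2 * rq ≤ u + v := by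
  nlinarith [sq_nonneg (u - v), sq_nonneg (u + v - 2 * rq)]

private lemma case2_ineq {δ γ ε M N A2 A3 A4 B2 B3 B4 c g r q : ℝ}
    (hε : 0 < ε) (hδ2 : 2 < δ) (hδγ : δ ≤ γ) (hδcg : δ ≤ c * g)
    (hc2 : c ^ 2 = 2) (hg2 : g ^ 2 = γ) (hcnn : 0 ≤ c) (hgnn : 0 ≤ g)
    (hA2 : 0 < A2) (hadm : 2 * A3 ^ 2 ≤ A2 * A4)
    (hB2 : 0 < B2) (hB4 : 0 < B4) (hBB : B2 * B4 = γ * B3 ^ 2)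
    (hM3 : |A3| ≤ M) (hN3 : N ≤ |B3|) (hN : 0 < N)
    (hkey : δ * (M ^ 2 + ε ^ 2 * N ^ 2) < 2 * M ^ 2 + γ * ε ^ 2 * N ^ 2)
    (hrnn : 0 ≤ r) (hqnn : 0 ≤ q) (hr2 : r ^ 2 = A2 * A4) (hq2 : q ^ 2 = B2 * B4) :
    δ * (A3 + ε * B3) ^ 2 ≤ (A2 + ε * B2) * (A4 + ε * B4) := by
  have hA4nn : 0 ≤ A4 := by
    by_contra hneg
    push_neg at hneg
    have h0 : (0:ℝ) ≤ A2 * A4 := le_trans (by positivity) hadm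
    have h1 : 0 < A2 * -A4 := mul_pos hA2 (neg_pos.mpr hneg)
    nlinarith [h0, h1]
  have hcross : 2 * (r * q) ≤ A2 * B4 + B2 * A4 := by
    apply amgm (mul_nonneg hA2.le hB4.le) (mul_nonneg hB2.le hA4nn)
      (mul_nonneg hrnn hqnn)
    rw [mul_pow, hr2, hq2]; ring
  have hrm : c * |A3| ≤ r := by
    have h1 : (c * |A3|) ^ 2 ≤ r ^ 2 := by
      rw [hr2, mul_pow, hc2, sq_abs]; exact hadm
    have hcm : 0 ≤ c * |A3| := mul_nonneg hcnn (abs_nonneg A3)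
    calc c * |A3| = Real.sqrt ((c * |A3|) ^ 2) := (Real.sqrt_sq hcm).symm
      _ ≤ Real.sqrt (r ^ 2) := Real.sqrt_le_sqrt h1
      _ = r := Real.sqrt_sq hrnn
  have hqn : q = g * |B3| := by
    have h1 : q ^ 2 = (g * |B3|) ^ 2 := by rw [hq2, hBB, mul_pow, hg2, sq_abs]
    have h2 : 0 ≤ g * |B3| := mul_nonneg hgnn (abs_nonneg _)
    rw [← Real.sqrt_sq hqnn, h1, Real.sqrt_sq h2]
  set m := |A3| with hm
  set nn := |B3| with hnn
  have hmnn : 0 ≤ m := abs_nonneg _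
  have hnnnn : 0 ≤ nn := abs_nonneg _
  have habs : (A3 + ε * B3) ^ 2 ≤ (m + ε * nn) ^ 2 := by
    have h1 : |A3 + ε * B3| ≤ m + ε * nn := by
      calc |A3 + ε * B3| ≤ |A3| + |ε * B3| := abs_add_le _ _
        _ = m + ε * nn := by rw [abs_mul, abs_of_pos hε]
    calc (A3 + ε * B3) ^ 2 = |A3 + ε * B3| ^ 2 := (sq_abs _).symm
      _ ≤ (m + ε * nn) ^ 2 := by
        exact pow_le_pow_left₀ (abs_nonneg _) h1 2
  have hM0 : 0 ≤ M := le_trans hmnn hM3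
  have hA : (δ - 2) * m ^ 2 ≤ (δ - 2) * M ^ 2 := by
    have hsq : m ^ 2 ≤ M ^ 2 := by nlinarith [hM3, hmnn]
    exact mul_le_mul_of_nonneg_left hsq (by linarith)
  have hBb : (γ - δ) * ε ^ 2 * N ^ 2 ≤ (γ - δ) * ε ^ 2 * nn ^ 2 := by
    have hsq : N ^ 2 ≤ nn ^ 2 := by nlinarith [hN3, hN]
    have hcoef : (0:ℝ) ≤ (γ - δ) * ε ^ 2 := mul_nonneg (by linarith) (sq_nonneg ε)
    exact mul_le_mul_of_nonneg_left hsq hcoef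
  have hMN : (δ - 2) * M ^ 2 ≤ (γ - δ) * ε ^ 2 * N ^ 2 := by nlinarith [hkey]
  have hmid : 2 * δ * ε * (m * nn) ≤ 2 * ε * (c * g) * (m * nn) := by
    have hco : (0:ℝ) ≤ ε * (m * nn) := mul_nonneg hε.le (mul_nonneg hmnn hnnnn)
    nlinarith [mul_le_mul_of_nonneg_right hδcg hco]
  have h2 : δ * (m + ε * nn) ^ 2
      ≤ 2 * m ^ 2 + 2 * ε * (c * g) * (m * nn) + γ * ε ^ 2 * nn ^ 2 := by
    have e1 : δ * (m + ε * nn) ^ 2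
        = δ * m ^ 2 + 2 * δ * ε * (m * nn) + δ * ε ^ 2 * nn ^ 2 := by ring
    rw [e1]
    linarith [hA, hBb, hMN, hmid]
  have hstep : (c * m) * (g * nn) ≤ r * q := by
    rw [hqn]; exact mul_le_mul_of_nonneg_right hrm (mul_nonneg hgnn hnnnn)
  have hcross2 : 2 * ((c * m) * (g * nn)) ≤ A2 * B4 + B2 * A4 := by linarith
  have hBBnn : B2 * B4 = γ * nn ^ 2 := by rw [hBB, hnn, sq_abs]
  have hm2 : m ^ 2 = A3 ^ 2 := sq_abs A3
  have h3 : 2 * m ^ 2 + 2 * ε * (c * g) * (m * nn) + γ * ε ^ 2 * nn ^ 2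
      ≤ (A2 + ε * B2) * (A4 + ε * B4) := by
    have h5 : ε * (2 * ((c * m) * (g * nn))) ≤ ε * (A2 * B4 + B2 * A4) :=
      mul_le_mul_of_nonneg_left hcross2 hε.le
    have h6 : ε ^ 2 * (B2 * B4) = γ * ε ^ 2 * nn ^ 2 := by rw [hBBnn]; ring
    have e2 : (A2 + ε * B2) * (A4 + ε * B4)
        = A2 * A4 + ε * (A2 * B4) + ε * (B2 * A4) + ε ^ 2 * (B2 * B4) := by ring
    rw [e2]
    linarith [hadm, h5, h6, hm2]
  calc δ * (A3 + ε * B3) ^ 2 ≤ δ * (m + ε * nn) ^ 2 :=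
      mul_le_mul_of_nonneg_left habs (by linarith)
    _ ≤ 2 * m ^ 2 + 2 * ε * (c * g) * (m * nn) + γ * ε ^ 2 * nn ^ 2 := h2
    _ ≤ (A2 + ε * B2) * (A4 + ε * B4) := h3

set_option maxHeartbeats 1000000 in
theorem perturbed_admissibility
    (I : Set ℝ) (hIopen : IsOpen I) (hIconn : I.OrdConnected)
    (Φ : ℝ → ℝ) (hC4 : ContDiffOn ℝ 4 Φ I)
    (hconv : ∀ t ∈ I, 0 ≤ iteratedDeriv 2 Φ t)
    (hadm : ∀ t ∈ I, 2 * (iteratedDeriv 3 Φ t) ^ 2 ≤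
      iteratedDeriv 2 Φ t * iteratedDeriv 4 Φ t)
    (a b : ℝ) (hab : a < b) (hsub : Set.Icc a b ⊆ I)
    (p : ℝ) (hp1 : 1 < p) (hp2 : p < 2)
    (Ψ : ℝ → ℝ) (hΨ : Ψ = fun t => (t - a + 1) ^ p)
    (M N γ : ℝ)
    (hM : M = sSup ((fun t => |iteratedDeriv 3 Φ t|) '' Set.Ioo a b))
    (hNdef : N = sInf ((fun t => |iteratedDeriv 3 Ψ t|) '' Set.Ioo a b))
    (hN : 0 < N) (hγ : γ = (3 - p) / (2 - p)) :
    ∀ ε > (0 : ℝ), ∀ δ : ℝ, 2 < δ →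
      δ < min (Real.sqrt (2 * γ))
        ((2 * M ^ 2 + γ * ε ^ 2 * N ^ 2) / (M ^ 2 + ε ^ 2 * N ^ 2)) →
      ∀ t ∈ Set.Ioo a b,
        δ * (iteratedDeriv 3 (fun s => Φ s + ε * Ψ s) t) ^ 2 ≤
          iteratedDeriv 2 (fun s => Φ s + ε * Ψ s) t *
            iteratedDeriv 4 (fun s => Φ s + ε * Ψ s) t := by
  -- continuity of global iterated derivatives of Φ on I
  have hcont : ∀ m : ℕ, (m : WithTop ℕ∞) ≤ 4 → ContinuousOn (iteratedDeriv m Φ) I := by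
    intro m hm
    exact (hC4.continuousOn_iteratedDerivWithin hm hIopen.uniqueDiffOn).congr
      (fun x hx => (iterDW_open hIopen hx).symm)
  -- derivative formulas for Ψ on Ioi (a-1)
  have hd1 : Set.EqOn (deriv Ψ) (fun s => p * (s - a + 1) ^ (p - 1)) (Set.Ioi (a - 1)) := by
    intro s hs
    rw [hΨ]
    exact (rpow_shift_hasDerivAt a p (by simp only [mem_Ioi] at hs; linarith)).deriv
  have hd2 : Set.EqOn (iteratedDeriv 2 Ψ)
      (fun s => p * (p - 1) * (s - a + 1) ^ (p - 2)) (Set.Ioi (a - 1)) := by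
    intro s hs
    have h1 : iteratedDeriv 2 Ψ s = deriv (deriv Ψ) s := by
      rw [iteratedDeriv_succ, iteratedDeriv_one]
    rw [h1, Filter.EventuallyEq.deriv_eq
      (Filter.eventuallyEq_of_mem (isOpen_Ioi.mem_nhds hs) hd1)]
    have hs' : 0 < s - a + 1 := by simp only [mem_Ioi] at hs; linarith
    have := ((rpow_shift_hasDerivAt a (p - 1) hs').const_mul p).deriv
    rw [this]
    have : p - 1 - 1 = p - 2 := by ring
    rw [this]; ring
  have hd3 : Set.EqOn (iteratedDeriv 3 Ψ)
      (fun s => p * (p - 1) * (p - 2) * (s - a + 1) ^ (p - 3)) (Set.Ioi (a - 1)) := by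
    intro s hs
    have h1 : iteratedDeriv 3 Ψ s = deriv (iteratedDeriv 2 Ψ) s := by
      rw [iteratedDeriv_succ]
    rw [h1, Filter.EventuallyEq.deriv_eq
      (Filter.eventuallyEq_of_mem (isOpen_Ioi.mem_nhds hs) hd2)]
    have hs' : 0 < s - a + 1 := by simp only [mem_Ioi] at hs; linarith
    have := ((rpow_shift_hasDerivAt a (p - 2) hs').const_mul (p * (p - 1))).deriv
    rw [this]
    have : p - 2 - 1 = p - 3 := by ring
    rw [this]; ring
  have hd4 : Set.EqOn (iteratedDeriv 4 Ψ)
      (fun s => p * (p - 1) * (p - 2) * (p - 3) * (s - a + 1) ^ (p - 4)) (Set.Ioi (a - 1)) := by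
    intro s hs
    have h1 : iteratedDeriv 4 Ψ s = deriv (iteratedDeriv 3 Ψ) s := by
      rw [iteratedDeriv_succ]
    rw [h1, Filter.EventuallyEq.deriv_eq
      (Filter.eventuallyEq_of_mem (isOpen_Ioi.mem_nhds hs) hd3)]
    have hs' : 0 < s - a + 1 := by simp only [mem_Ioi] at hs; linarith
    have := ((rpow_shift_hasDerivAt a (p - 3) hs').const_mul (p * (p - 1) * (p - 2))).deriv
    rw [this]
    have : p - 3 - 1 = p - 4 := by ring
    rw [this]; ring
  -- smoothness of Ψ on U := I ∩ Ioi (a-1)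
  have hΨU : ContDiffOn ℝ 4 Ψ (I ∩ Set.Ioi (a - 1)) := by
    intro x hx
    apply ContDiffAt.contDiffWithinAt
    have hx0 : x - a + 1 ≠ 0 := by
      have := hx.2; simp only [mem_Ioi] at this; intro h; linarith
    rw [hΨ]
    exact (Real.contDiffAt_rpow_const_of_ne hx0).comp x
      (((contDiffAt_id).sub contDiffAt_const).add contDiffAt_const)
  intro ε hε δ hδ2 hδmin t ht
  obtain ⟨hta, htb⟩ := ht
  have htI : t ∈ I := hsub ⟨hta.le, htb.le⟩
  have hx : 0 < t - a + 1 := by linarith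
  have htIoi : t ∈ Set.Ioi (a - 1) := by simp only [mem_Ioi]; linarith
  -- decomposition of iterated derivatives of the sum
  have hUopen : IsOpen (I ∩ Set.Ioi (a - 1)) := hIopen.inter isOpen_Ioi
  have htU : t ∈ I ∩ Set.Ioi (a - 1) := ⟨htI, htIoi⟩
  have hsum : ∀ n : ℕ, (n : WithTop ℕ∞) ≤ 4 →
      iteratedDeriv n (fun s => Φ s + ε * Ψ s) t
        = iteratedDeriv n Φ t + ε * iteratedDeriv n Ψ t := by
    intro n hn
    rw [← iterDW_open (n := n) (f := fun s => Φ s + ε * Ψ s) hUopen htU]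
    have h2 : iteratedDerivWithin n (Φ + fun s => ε * Ψ s) (I ∩ Set.Ioi (a - 1)) t
        = iteratedDerivWithin n Φ (I ∩ Set.Ioi (a - 1)) t
          + iteratedDerivWithin n (fun s => ε * Ψ s) (I ∩ Set.Ioi (a - 1)) t :=
      iteratedDerivWithin_add htU hUopen.uniqueDiffOn
        ((hC4.mono Set.inter_subset_left).of_le hn t htU) (contDiffOn_const.mul (hΨU.of_le hn) t htU)
    have h3 : iteratedDerivWithin n (fun s => Φ s + ε * Ψ s) (I ∩ Set.Ioi (a - 1)) t
        = iteratedDerivWithin n (Φ + fun s => ε * Ψ s) (I ∩ Set.Ioi (a - 1)) t := rfl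
    rw [h3, h2, iteratedDerivWithin_const_mul htU hUopen.uniqueDiffOn ε (hΨU.of_le hn t htU),
      iterDW_open hUopen htU, iterDW_open hUopen htU]
  -- notation
  rw [hsum 2 (by norm_num), hsum 3 (by norm_num), hsum 4 (by norm_num)]
  set A2 := iteratedDeriv 2 Φ t with hA2def
  set A3 := iteratedDeriv 3 Φ t with hA3def
  set A4 := iteratedDeriv 4 Φ t with hA4def
  set B2 := iteratedDeriv 2 Ψ t with hB2def
  set B3 := iteratedDeriv 3 Ψ t with hB3def
  set B4 := iteratedDeriv 4 Ψ t with hB4def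
  -- facts about Ψ's derivatives at t
  have hB2f : B2 = p * (p - 1) * (t - a + 1) ^ (p - 2) := hd2 htIoi
  have hB3f : B3 = p * (p - 1) * (p - 2) * (t - a + 1) ^ (p - 3) := hd3 htIoi
  have hB4f : B4 = p * (p - 1) * (p - 2) * (p - 3) * (t - a + 1) ^ (p - 4) := hd4 htIoi
  have hB2pos : 0 < B2 := by
    rw [hB2f]
    have h1 := Real.rpow_pos_of_pos hx (p - 2)
    have h2 : 0 < p * (p - 1) := by nlinarith
    exact mul_pos h2 h1
  have hB4pos : 0 < B4 := by
    rw [hB4f]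
    have h1 := Real.rpow_pos_of_pos hx (p - 4)
    have h0 : 0 < (p - 2) * (p - 3) :=
      mul_pos_of_neg_of_neg (by linarith) (by linarith)
    have h2 : 0 < p * (p - 1) * (p - 2) * (p - 3) := by
      have h3 := mul_pos (mul_pos (show (0:ℝ) < p by linarith)
        (show (0:ℝ) < p - 1 by linarith)) h0
      nlinarith [h3]
    exact mul_pos h2 h1
  have hBB : B2 * B4 = γ * B3 ^ 2 := by
    rw [hB2f, hB3f, hB4f, hγ]
    have hxx : (t - a + 1) ^ (p - 2) * (t - a + 1) ^ (p - 4)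
        = (t - a + 1) ^ (p - 3) * (t - a + 1) ^ (p - 3) := by
      rw [← Real.rpow_add hx, ← Real.rpow_add hx]; ring_nf
    have h2p : (2 : ℝ) - p ≠ 0 := by intro h; linarith
    rw [div_mul_eq_mul_div, eq_div_iff h2p]
    linear_combination (p * (p - 1)) ^ 2 * (p - 2) ^ 2 * (3 - p) * hxx
  -- facts about γ and δ
  have hγ2 : 2 < γ := by
    rw [hγ, lt_div_iff₀ (by linarith : (0:ℝ) < 2 - p)]; linarith
  have hδ1 : δ < Real.sqrt (2 * γ) := lt_of_lt_of_le hδmin (min_le_left _ _)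
  have hδ2' : δ < (2 * M ^ 2 + γ * ε ^ 2 * N ^ 2) / (M ^ 2 + ε ^ 2 * N ^ 2) :=
    lt_of_lt_of_le hδmin (min_le_right _ _)
  have hδγ : δ ≤ γ := by
    have h1 : Real.sqrt (2 * γ) ≤ γ := by
      have : Real.sqrt (2 * γ) ≤ Real.sqrt (γ ^ 2) := Real.sqrt_le_sqrt (by nlinarith)
      rwa [Real.sqrt_sq (by linarith)] at this
    linarith
  -- M and N bounds
  have hM3 : |A3| ≤ M := by
    rw [hM]
    apply le_csSup
    · have hc : ContinuousOn (fun s => |iteratedDeriv 3 Φ s|) (Set.Icc a b) :=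
        ((hcont 3 (by norm_num)).mono hsub).abs
      exact (isCompact_Icc.image_of_continuousOn hc).bddAbove.mono
        (Set.image_mono Set.Ioo_subset_Icc_self)
    · exact ⟨t, ⟨hta, htb⟩, rfl⟩
  have hMnn : 0 ≤ M := le_trans (abs_nonneg _) hM3
  have hN3 : N ≤ |B3| := by
    rw [hNdef]
    apply csInf_le
    · exact ⟨0, fun y hy => by obtain ⟨s, _, rfl⟩ := hy; exact abs_nonneg _⟩
    · exact ⟨t, ⟨hta, htb⟩, rfl⟩
  -- key numeric inequality from δ < quotient
  have hden : (0:ℝ) < M ^ 2 + ε ^ 2 * N ^ 2 := by positivity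
  have hkey : δ * (M ^ 2 + ε ^ 2 * N ^ 2) < 2 * M ^ 2 + γ * ε ^ 2 * N ^ 2 :=
    (lt_div_iff₀ hden).mp hδ2'
  -- sqrt facts
  set c := Real.sqrt 2 with hc
  set g := Real.sqrt γ with hg
  have hc2 : c ^ 2 = 2 := Real.sq_sqrt (by norm_num)
  have hg2 : g ^ 2 = γ := Real.sq_sqrt (by linarith)
  have hcnn : 0 ≤ c := Real.sqrt_nonneg _
  have hgnn : 0 ≤ g := Real.sqrt_nonneg _
  have hδcg : δ ≤ c * g := by
    rw [hc, hg, ← Real.sqrt_mul (by norm_num : (0:ℝ) ≤ 2)]; exact hδ1.le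
  -- second-derivative test: A2 = 0 → 0 ≤ A4
  have hA2nn : 0 ≤ A2 := hconv t htI
  have hadm' : 2 * A3 ^ 2 ≤ A2 * A4 := hadm t htI
  have hsecond : A2 = 0 → 0 ≤ A4 := by
    intro hA20
    by_contra hA4neg
    push_neg at hA4neg
    have hA30 : A3 = 0 := sq_zero_of hadm' hA20
    -- iteratedDeriv 3 Φ has derivative iteratedDeriv 4 Φ t at t
    have hdiff : DifferentiableAt ℝ (iteratedDeriv 3 Φ) t := by
      have h := (hC4.differentiableOn_iteratedDerivWithin (m := 3) (by norm_num)
        hIopen.uniqueDiffOn t htI).differentiableAt (hIopen.mem_nhds htI)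
      have hEq : iteratedDeriv 3 Φ =ᶠ[𝓝 t] iteratedDerivWithin 3 Φ I :=
        Filter.eventuallyEq_of_mem (hIopen.mem_nhds htI)
          (fun x hx => (iterDW_open hIopen hx).symm)
      exact h.congr_of_eventuallyEq hEq
    have hder : HasDerivAt (iteratedDeriv 3 Φ) A4 t := by
      have h1 := hdiff.hasDerivAt
      have h44 : deriv (iteratedDeriv 3 Φ) t = A4 := by
        rw [hA4def, show (4:ℕ) = 3 + 1 from rfl, iteratedDeriv_succ (n := 3)]
      rwa [h44] at h1
    have hslope : Tendsto (slope (iteratedDeriv 3 Φ) t) (𝓝[≠] t) (𝓝 A4) :=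
      hasDerivAt_iff_tendsto_slope.mp hder
    have hev : ∀ᶠ s in 𝓝[>] t, slope (iteratedDeriv 3 Φ) t s < 0 :=
      (hslope.eventually_lt_const hA4neg).filter_mono
        (nhdsWithin_mono t (fun s hs => ne_of_gt hs))
    have hevI : ∀ᶠ s in 𝓝[>] t, s ∈ I :=
      Filter.eventually_of_mem (mem_nhdsWithin_of_mem_nhds (hIopen.mem_nhds htI))
        (fun _ h => h)
    have hevg : ∀ᶠ s in 𝓝[>] t, iteratedDeriv 3 Φ s < 0 ∧ s ∈ I := by
      filter_upwards [hev, hevI, self_mem_nhdsWithin] with s h1 h2 h3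
      refine ⟨?_, h2⟩
      rw [slope_def_field] at h1
      have hst : 0 < s - t := sub_pos.mpr h3
      have this := h1
      rw [← hA3def, hA30] at this
      rcases div_neg_iff.mp this with ⟨h4, h5⟩ | ⟨h4, h5⟩
      · linarith
      · linarith
    obtain ⟨u, hu, hsub'⟩ := mem_nhdsGT_iff_exists_Ioo_subset.mp hevg
    have htu : t < u := hu
    set w := (t + u) / 2 with hw
    have htw : t < w := by rw [hw]; linarith
    have hwu : w < u := by rw [hw]; linarith
    have hIccI : Set.Icc t w ⊆ I := by
      intro s hs
      rcases eq_or_lt_of_le hs.1 with h | h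
      · rwa [← h]
      · exact (hsub' ⟨h, lt_of_le_of_lt hs.2 hwu⟩).2
    have hanti : StrictAntiOn (iteratedDeriv 2 Φ) (Set.Icc t w) := by
      apply strictAntiOn_of_deriv_neg (convex_Icc t w)
      · exact (hcont 2 (by norm_num)).mono hIccI
      · intro s hs
        rw [interior_Icc] at hs
        rw [show deriv (iteratedDeriv 2 Φ) = iteratedDeriv 3 Φ by
          rw [show (3:ℕ) = 2 + 1 from rfl, iteratedDeriv_succ (n := 2)]]
        exact (hsub' ⟨hs.1, lt_trans hs.2 hwu⟩).1
    have hlt : iteratedDeriv 2 Φ w < iteratedDeriv 2 Φ t :=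
      hanti (Set.left_mem_Icc.mpr htw.le) (Set.right_mem_Icc.mpr htw.le) htw
    have hwI : w ∈ I := hIccI (Set.right_mem_Icc.mpr htw.le)
    have := hconv w hwI
    rw [← hA2def] at hlt
    linarith
  -- main inequality
  rcases eq_or_lt_of_le hA2nn with hA20 | hA2pos
  · -- case A2 = 0
    have hA20 := hA20.symm
    have hA30 : A3 = 0 := sq_zero_of hadm' hA20
    rw [hA20, hA30]
    exact case1_ineq hδγ hε hB2pos (hsecond hA20) hBB
  · -- case A2 > 0
    have hAA : (0:ℝ) ≤ A2 * A4 := le_trans (by positivity) hadm'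
    exact case2_ineq hε hδ2 hδγ hδcg hc2 hg2 hcnn hgnn hA2pos hadm' hB2pos hB4pos hBB
      hM3 hN3 hN hkey (Real.sqrt_nonneg _) (Real.sqrt_nonneg _)
      (Real.sq_sqrt hAA) (Real.sq_sqrt (mul_nonneg hB2pos.le hB4pos.le))
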